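/- arXiv:2205.15473 — 6 statements merged into one kernel-verified Lean document; each statement's English description precedes it below -/
import Mathlib

section
/- Let n be a positive integer, let A and B be diagonal positive definite real n×n matrices, and let a, b ∈ ℝⁿ. For λ ∈ [0,1] define E_λ = λA + (1−λ)B and m_λ = E_λ⁻¹(λA a + (1−λ)B b). Then the function λ ↦ ‖m_λ − b‖_B is monotonically increasing on [0,1]; that is, for all 0 ≤ λ₁ ≤ λ₂ ≤ 1 one has ‖m_{λ₁} − b‖_B ≤ ‖m_{λ₂} − b‖_B. -/
open Matrix

/-- The path point `m_λ = (λA + (1-λ)B)⁻¹ (λA a + (1-λ)B b)`. -/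
noncomputable def mPath {n : ℕ} (A B : Matrix (Fin n) (Fin n) ℝ) (a b : Fin n → ℝ)
    (lam : ℝ) : Fin n → ℝ :=
  (lam • A + (1 - lam) • B)⁻¹ *ᵥ (lam • (A *ᵥ a) + (1 - lam) • (B *ᵥ b))

/-- The norm `‖w‖_M = √(wᵀ M w)`. -/
noncomputable def matNorm {n : ℕ} (M : Matrix (Fin n) (Fin n) ℝ) (w : Fin n → ℝ) : ℝ :=
  Real.sqrt (w ⬝ᵥ (M *ᵥ w))

lemma denom_pos (x p q : ℝ) (h0 : 0 ≤ x) (h1 : x ≤ 1) (hp : 0 < p) (hq : 0 < q) :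
    0 < x*p + (1-x)*q := by
  rcases h0.lt_or_eq with h | h
  · nlinarith [mul_pos h hp, mul_nonneg (sub_nonneg.2 h1) hq.le]
  · rw [← h]; ring_nf; linarith

lemma key_ratio (x y p q : ℝ) (hp : 0 < p) (hq : 0 < q) (h1 : 0 ≤ x) (h12 : x ≤ y)
    (h2 : y ≤ 1) : x*p/(x*p+(1-x)*q) ≤ y*p/(y*p+(1-y)*q) := by
  have hd1 : 0 < x*p+(1-x)*q := denom_pos x p q h1 (h12.trans h2) hp hq
  have hd2 : 0 < y*p+(1-y)*q := denom_pos y p q (h1.trans h12) h2 hp hq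
  rw [div_le_div_iff₀ hd1 hd2]
  nlinarith [mul_nonneg (mul_nonneg (sub_nonneg.2 h12) hp.le) hq.le]

lemma mPath_sub_b {n : ℕ} (A B : Matrix (Fin n) (Fin n) ℝ) (dA dB : Fin n → ℝ)
    (hA : A = Matrix.diagonal dA) (hB : B = Matrix.diagonal dB)
    (hdA : ∀ i, 0 < dA i) (hdB : ∀ i, 0 < dB i)
    (a b : Fin n → ℝ) (l : ℝ) (h0 : 0 ≤ l) (h1 : l ≤ 1) (i : Fin n) :
    (mPath A B a b l - b) i = l * dA i / (l * dA i + (1-l) * dB i) * (a i - b i) := by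
  have hd : ∀ j, 0 < l * dA j + (1-l) * dB j :=
    fun j => denom_pos l (dA j) (dB j) h0 h1 (hdA j) (hdB j)
  have hdiag : l • A + (1 - l) • B
      = Matrix.diagonal (fun j => l * dA j + (1-l) * dB j) := by
    subst hA hB
    ext i j
    by_cases h : i = j <;> simp [Matrix.diagonal, h]
  have hinv : (l • A + (1 - l) • B)⁻¹
      = Matrix.diagonal (fun j => (l * dA j + (1-l) * dB j)⁻¹) := by
    rw [hdiag]
    apply Matrix.inv_eq_right_inv
    rw [Matrix.diagonal_mul_diagonal]
    convert Matrix.diagonal_one using 2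
    funext j
    exact mul_inv_cancel₀ (hd j).ne'
  unfold mPath
  rw [hinv, hA, hB]
  simp only [Pi.sub_apply, Matrix.mulVec_diagonal, Pi.add_apply, Pi.smul_apply, smul_eq_mul]
  have hne : (l * dA i + (1-l) * dB i) ≠ 0 := (hd i).ne'
  field_simp
  ring

theorem mPath_norm_to_b_monotone {n : ℕ} (hn : 0 < n)
    (A B : Matrix (Fin n) (Fin n) ℝ) (dA dB : Fin n → ℝ)
    (hA : A = Matrix.diagonal dA) (hB : B = Matrix.diagonal dB)
    (hdA : ∀ i, 0 < dA i) (hdB : ∀ i, 0 < dB i)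
    (a b : Fin n → ℝ) :
    ∀ l1 l2 : ℝ, 0 ≤ l1 → l1 ≤ l2 → l2 ≤ 1 →
      matNorm B (mPath A B a b l1 - b) ≤ matNorm B (mPath A B a b l2 - b) := by
  intro l1 l2 h1 h12 h2
  have e1 : mPath A B a b l1 - b
      = fun i => l1 * dA i / (l1 * dA i + (1-l1) * dB i) * (a i - b i) :=
    funext (mPath_sub_b A B dA dB hA hB hdA hdB a b l1 h1 (h12.trans h2))
  have e2 : mPath A B a b l2 - b
      = fun i => l2 * dA i / (l2 * dA i + (1-l2) * dB i) * (a i - b i) :=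
    funext (mPath_sub_b A B dA dB hA hB hdA hdB a b l2 (h1.trans h12) h2)
  unfold matNorm
  rw [e1, e2]
  apply Real.sqrt_le_sqrt
  simp only [hB, dotProduct, Matrix.mulVec_diagonal]
  apply Finset.sum_le_sum
  intro i _
  set t1 := l1 * dA i / (l1 * dA i + (1-l1) * dB i) with ht1def
  set t2 := l2 * dA i / (l2 * dA i + (1-l2) * dB i) with ht2def
  have hd1 : 0 < l1 * dA i + (1-l1) * dB i :=
    denom_pos l1 (dA i) (dB i) h1 (h12.trans h2) (hdA i) (hdB i)
  have ht1 : 0 ≤ t1 := by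
    apply div_nonneg _ hd1.le
    exact mul_nonneg h1 (hdA i).le
  have h12' : t1 ≤ t2 := key_ratio l1 l2 (dA i) (dB i) (hdA i) (hdB i) h1 h12 h2
  have hsq : t1^2 ≤ t2^2 := by nlinarith
  nlinarith [mul_le_mul_of_nonneg_left (mul_le_mul_of_nonneg_right hsq (sq_nonneg (a i - b i))) (hdB i).le]
end

section
/- Let n be a positive integer, let A and B be diagonal positive definite real n×n matrices, and let a, b ∈ ℝⁿ. For λ ∈ [0,1] define E_λ = λA + (1−λ)B and m_λ = E_λ⁻¹(λA a + (1−λ)B b). Then the function λ ↦ ‖m_λ − a‖_A is monotonically decreasing on [0,1]; that is, for all 0 ≤ λ₁ ≤ λ₂ ≤ 1 one has ‖m_{λ₂} − a‖_A ≤ ‖m_{λ₁} − a‖_A. -/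
open Matrix

private lemma gpos (p q l : ℝ) (hp : 0 < p) (hq : 0 < q) (h0 : 0 ≤ l) (h1 : l ≤ 1) :
    0 < l * p + (1 - l) * q := by
  rcases le_total p q with h | h <;> nlinarith

private lemma mPath_comp {n : ℕ} (dA dB : Fin n → ℝ) (l : ℝ) (a b : Fin n → ℝ)
    (hg : ∀ i, l * dA i + (1 - l) * dB i ≠ 0) (i : Fin n) :
    (mPath (Matrix.diagonal dA) (Matrix.diagonal dB) a b l - a) i
      = ((1 - l) * dB i / (l * dA i + (1 - l) * dB i)) * (b i - a i) := by
  unfold mPath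
  have h : l • Matrix.diagonal dA + (1 - l) • Matrix.diagonal dB
      = Matrix.diagonal (fun i => l * dA i + (1 - l) * dB i) := by
    ext j k
    by_cases hjk : j = k <;> simp [Matrix.diagonal_apply, hjk]
  have hinv : (Matrix.diagonal (fun i => l * dA i + (1 - l) * dB i))⁻¹
      = Matrix.diagonal (fun i => (l * dA i + (1 - l) * dB i)⁻¹) := by
    apply Matrix.inv_eq_left_inv
    rw [Matrix.diagonal_mul_diagonal]
    convert Matrix.diagonal_one using 2
    funext j
    exact inv_mul_cancel₀ (hg j)
  rw [h, hinv]
  simp only [Pi.sub_apply, Matrix.mulVec_diagonal, Pi.add_apply, Pi.smul_apply, smul_eq_mul]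
  have hgi := hg i
  rw [div_mul_eq_mul_div, eq_div_iff hgi, sub_mul, inv_mul_eq_div, div_mul_cancel₀ _ hgi]
  ring

theorem mPath_norm_to_a_antitone {n : ℕ} (hn : 0 < n)
    (A B : Matrix (Fin n) (Fin n) ℝ) (dA dB : Fin n → ℝ)
    (hA : A = Matrix.diagonal dA) (hB : B = Matrix.diagonal dB)
    (hdA : ∀ i, 0 < dA i) (hdB : ∀ i, 0 < dB i)
    (a b : Fin n → ℝ) :
    ∀ l1 l2 : ℝ, 0 ≤ l1 → l1 ≤ l2 → l2 ≤ 1 →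
      matNorm A (mPath A B a b l2 - a) ≤ matNorm A (mPath A B a b l1 - a) := by
  subst hA hB
  intro l1 l2 h0 h12 h21
  have h1 : l1 ≤ 1 := le_trans h12 h21
  have h02 : 0 ≤ l2 := le_trans h0 h12
  have hg1 : ∀ i, 0 < l1 * dA i + (1 - l1) * dB i :=
    fun i => gpos _ _ _ (hdA i) (hdB i) h0 h1
  have hg2 : ∀ i, 0 < l2 * dA i + (1 - l2) * dB i :=
    fun i => gpos _ _ _ (hdA i) (hdB i) h02 h21
  set c : ℝ → Fin n → ℝ := fun l i => (1 - l) * dB i / (l * dA i + (1 - l) * dB i) with hc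
  have hcomp1 := mPath_comp dA dB l1 a b (fun i => (hg1 i).ne')
  have hcomp2 := mPath_comp dA dB l2 a b (fun i => (hg2 i).ne')
  unfold matNorm
  apply Real.sqrt_le_sqrt
  unfold dotProduct
  apply Finset.sum_le_sum
  intro i _
  rw [Matrix.mulVec_diagonal, Matrix.mulVec_diagonal, hcomp1 i, hcomp2 i]
  have hc2nn : 0 ≤ c l2 i :=
    div_nonneg (mul_nonneg (by linarith) (hdB i).le) (hg2 i).le
  have hle : c l2 i ≤ c l1 i := by
    rw [hc]
    simp only
    rw [div_le_div_iff₀ (hg2 i) (hg1 i)]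
    nlinarith [mul_nonneg (mul_nonneg (sub_nonneg.2 h12) (hdA i).le) (hdB i).le,
      sq_nonneg (dB i), (hdB i).le]
  have hd := hdA i
  nlinarith [mul_nonneg (mul_nonneg (sub_nonneg.2 hle) (add_nonneg hc2nn (le_trans hc2nn hle)))
    (sq_nonneg (b i - a i))]
end

section
/- Let n be a positive integer, let A and B be diagonal positive definite real n×n matrices, and let a, b ∈ ℝⁿ. For λ ∈ [0,1] define m_λ = (λA + (1−λ)B)⁻¹(λA a + (1−λ)B b). If for some λ̃ ∈ [0,1] the point m_{λ̃} lies outside the ellipsoid E(B, b), i.e., ‖m_{λ̃} − b‖_B > 1, then for every λ ∈ [λ̃, 1] the point m_λ also lies outside E(B, b): ‖m_λ − b‖_B > 1. -/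
open Matrix

/-- The ellipsoid `E(M, m) = {x | ‖x - m‖_M ≤ 1}`. -/
noncomputable def ellipsoid {n : ℕ} (M : Matrix (Fin n) (Fin n) ℝ) (m : Fin n → ℝ) :
    Set (Fin n → ℝ) :=
  {x | matNorm M (x - m) ≤ 1}

lemma key {n : ℕ} (dA dB : Fin n → ℝ) (hdA : ∀ i, 0 < dA i) (hdB : ∀ i, 0 < dB i)
    (a b : Fin n → ℝ) (lam : ℝ) (h0 : 0 ≤ lam) (h1 : lam ≤ 1) (i : Fin n) :
    (mPath (Matrix.diagonal dA) (Matrix.diagonal dB) a b lam - b) i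
      = lam * dA i * (a i - b i) / (lam * dA i + (1 - lam) * dB i) := by
  have hpos : ∀ j, 0 < lam * dA j + (1 - lam) * dB j := by
    intro j
    rcases lt_or_eq_of_le h1 with h | h
    · have : 0 < (1 - lam) * dB j := mul_pos (by linarith) (hdB j)
      have : 0 ≤ lam * dA j := mul_nonneg h0 (hdA j).le
      linarith
    · have : 0 < lam * dA j := mul_pos (by linarith) (hdA j)
      nlinarith [mul_nonneg (by linarith : (0:ℝ) ≤ 1 - lam) (hdB j).le]
  have hdiag : lam • Matrix.diagonal dA + (1 - lam) • Matrix.diagonal dB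
      = Matrix.diagonal (fun j => lam * dA j + (1 - lam) * dB j) := by
    rw [← Matrix.diagonal_smul, ← Matrix.diagonal_smul, ← Matrix.diagonal_add]
    rfl
  have hinv : (lam • Matrix.diagonal dA + (1 - lam) • Matrix.diagonal dB)⁻¹
      = Matrix.diagonal (fun j => (lam * dA j + (1 - lam) * dB j)⁻¹) := by
    rw [hdiag]
    apply Matrix.inv_eq_right_inv
    rw [Matrix.diagonal_mul_diagonal]
    convert Matrix.diagonal_one
    exact mul_inv_cancel₀ (hpos _).ne'
  simp only [mPath, hinv, Pi.sub_apply, Matrix.mulVec_diagonal, Pi.add_apply, Pi.smul_apply,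
    smul_eq_mul]
  field_simp [(hpos i).ne']
  ring

theorem mPath_stays_outside_B {n : ℕ} (hn : 0 < n)
    (A B : Matrix (Fin n) (Fin n) ℝ) (dA dB : Fin n → ℝ)
    (hA : A = Matrix.diagonal dA) (hB : B = Matrix.diagonal dB)
    (hdA : ∀ i, 0 < dA i) (hdB : ∀ i, 0 < dB i)
    (a b : Fin n → ℝ)
    (ltil : ℝ) (h0 : 0 ≤ ltil) (h1 : ltil ≤ 1)
    (hout : 1 < matNorm B (mPath A B a b ltil - b)) :
    ∀ lam : ℝ, ltil ≤ lam → lam ≤ 1 → 1 < matNorm B (mPath A B a b lam - b) := by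
  subst hA hB
  intro lam hl hl1
  have h0' : 0 ≤ lam := le_trans h0 hl
  have hpos : ∀ (t : ℝ), 0 ≤ t → t ≤ 1 → ∀ j, 0 < t * dA j + (1 - t) * dB j := by
    intro t ht0 ht1 j
    rcases lt_or_eq_of_le ht1 with h | h
    · nlinarith [mul_nonneg ht0 (hdA j).le, mul_pos (by linarith : (0:ℝ) < 1 - t) (hdB j)]
    · nlinarith [mul_pos (by linarith : (0:ℝ) < t) (hdA j),
        mul_nonneg (by linarith : (0:ℝ) ≤ 1 - t) (hdB j).le]
  have key' : ∀ t : ℝ, 0 ≤ t → t ≤ 1 →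
      matNorm (Matrix.diagonal dB)
        (mPath (Matrix.diagonal dA) (Matrix.diagonal dB) a b t - b)
      = Real.sqrt (∑ i, dB i *
          (t * dA i / (t * dA i + (1 - t) * dB i)) ^ 2 * (a i - b i) ^ 2) := by
    intro t ht0 ht1
    unfold matNorm
    congr 1
    rw [dotProduct]
    apply Finset.sum_congr rfl
    intro i _
    rw [Matrix.mulVec_diagonal, key dA dB hdA hdB a b t ht0 ht1 i]
    field_simp
  -- per-term monotonicity
  have hmono : ∀ i, dB i * (ltil * dA i / (ltil * dA i + (1 - ltil) * dB i)) ^ 2 * (a i - b i) ^ 2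
      ≤ dB i * (lam * dA i / (lam * dA i + (1 - lam) * dB i)) ^ 2 * (a i - b i) ^ 2 := by
    intro i
    have d1 := hpos ltil h0 h1 i
    have d2 := hpos lam h0' hl1 i
    have hf0 : 0 ≤ ltil * dA i / (ltil * dA i + (1 - ltil) * dB i) :=
      div_nonneg (mul_nonneg h0 (hdA i).le) d1.le
    have hff : ltil * dA i / (ltil * dA i + (1 - ltil) * dB i)
        ≤ lam * dA i / (lam * dA i + (1 - lam) * dB i) := by
      rw [div_le_div_iff₀ d1 d2]
      nlinarith [hdA i, hdB i, mul_nonneg (mul_nonneg (sub_nonneg.2 hl) (hdA i).le) (hdB i).le]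
    have hsq : (ltil * dA i / (ltil * dA i + (1 - ltil) * dB i)) ^ 2
        ≤ (lam * dA i / (lam * dA i + (1 - lam) * dB i)) ^ 2 :=
      pow_le_pow_left₀ hf0 hff 2
    have hnn : 0 ≤ dB i * (a i - b i) ^ 2 := mul_nonneg (hdB i).le (sq_nonneg _)
    nlinarith [hnn, hsq]
  have hsum : (∑ i, dB i * (ltil * dA i / (ltil * dA i + (1 - ltil) * dB i)) ^ 2 * (a i - b i) ^ 2)
      ≤ ∑ i, dB i * (lam * dA i / (lam * dA i + (1 - lam) * dB i)) ^ 2 * (a i - b i) ^ 2 :=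
    Finset.sum_le_sum fun i _ => hmono i
  rw [key' ltil h0 h1] at hout
  rw [key' lam h0' hl1]
  have h1' : (1:ℝ) ^ 2 < _ := (Real.lt_sqrt (by norm_num)).1 hout
  exact (Real.lt_sqrt (by norm_num)).2 (lt_of_lt_of_le h1' hsum)
end

section
/- Let n be a positive integer, let A and B be diagonal positive definite real n×n matrices, and let a, b ∈ ℝⁿ. For λ ∈ [0,1] define m_λ = (λA + (1−λ)B)⁻¹(λA a + (1−λ)B b). If for some λ̃ ∈ [0,1] the point m_{λ̃} lies in neither ellipsoid, i.e., ‖m_{λ̃} − a‖_A > 1 and ‖m_{λ̃} − b‖_B > 1, then there exists no λ ∈ [0,1] such that m_λ lies simultaneously in both ellipsoids E(A, a) and E(B, b). (This is the correctness certificate returned by the bisection search: a single point m_{λ̃} outside both ellipsoids certifies that no point on the path m_λ witnesses intersection.) -/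
open Matrix

lemma Dpos {p q lam : ℝ} (hp : 0 < p) (hq : 0 < q) (h0 : 0 ≤ lam) (h1 : lam ≤ 1) :
    0 < lam * p + (1 - lam) * q := by
  rcases eq_or_lt_of_le h0 with h | h
  · have : lam = 0 := h.symm
    subst this; simpa using hq
  · nlinarith [mul_pos h hp, mul_nonneg (by linarith : (0:ℝ) ≤ 1 - lam) hq.le]

lemma key_frac_mono (p q : ℝ) (hp : 0 < p) (hq : 0 < q) {lam mu : ℝ}
    (h0 : 0 ≤ lam) (h : lam ≤ mu) (h1 : mu ≤ 1) :
    lam * p / (lam * p + (1 - lam) * q) ≤ mu * p / (mu * p + (1 - mu) * q) := by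
  have hDl : 0 < lam * p + (1 - lam) * q := Dpos hp hq h0 (le_trans h h1)
  have hDm : 0 < mu * p + (1 - mu) * q := Dpos hp hq (le_trans h0 h) h1
  rw [div_le_div_iff₀ hDl hDm]
  nlinarith [mul_nonneg (mul_nonneg hp.le hq.le) (sub_nonneg.2 h)]

lemma mPath_eq {n : ℕ} (dA dB : Fin n → ℝ) (hdA : ∀ i, 0 < dA i) (hdB : ∀ i, 0 < dB i)
    (a b : Fin n → ℝ) {lam : ℝ} (h0 : 0 ≤ lam) (h1 : lam ≤ 1) :
    mPath (Matrix.diagonal dA) (Matrix.diagonal dB) a b lam =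
      fun i => (lam * dA i * a i + (1 - lam) * dB i * b i) /
        (lam * dA i + (1 - lam) * dB i) := by
  have hD : ∀ i, lam * dA i + (1 - lam) * dB i ≠ 0 :=
    fun i => (Dpos (hdA i) (hdB i) h0 h1).ne'
  have hM : lam • Matrix.diagonal dA + (1 - lam) • Matrix.diagonal dB =
      Matrix.diagonal (fun i => lam * dA i + (1 - lam) * dB i) := by
    ext i j
    by_cases h : i = j <;> simp [Matrix.diagonal_apply, h]
  have hinv : (Matrix.diagonal (fun i => lam * dA i + (1 - lam) * dB i))⁻¹ =
      Matrix.diagonal (fun i => (lam * dA i + (1 - lam) * dB i)⁻¹) := by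
    apply Matrix.inv_eq_right_inv
    rw [Matrix.diagonal_mul_diagonal]
    rw [show (fun i => (lam * dA i + (1 - lam) * dB i) *
        (lam * dA i + (1 - lam) * dB i)⁻¹) = fun _ => (1:ℝ) from
      funext fun i => mul_inv_cancel₀ (hD i)]
    exact Matrix.diagonal_one
  unfold mPath
  rw [hM, hinv]
  funext i
  simp [Matrix.mulVec_diagonal, Pi.add_apply, Pi.smul_apply, Matrix.mulVec,
    dotProduct, Matrix.diagonal_apply]
  rw [inv_mul_eq_div]
  congr 1
  ring

lemma matNorm_diag {n : ℕ} (d : Fin n → ℝ) (w : Fin n → ℝ) :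
    matNorm (Matrix.diagonal d) w = Real.sqrt (∑ i, d i * (w i)^2) := by
  unfold matNorm
  congr 1
  simp [dotProduct, Matrix.mulVec_diagonal]
  apply Finset.sum_congr rfl
  intro i _; ring

theorem mPath_certificate_no_intersection_witness {n : ℕ} (hn : 0 < n)
    (A B : Matrix (Fin n) (Fin n) ℝ) (dA dB : Fin n → ℝ)
    (hA : A = Matrix.diagonal dA) (hB : B = Matrix.diagonal dB)
    (hdA : ∀ i, 0 < dA i) (hdB : ∀ i, 0 < dB i)
    (a b : Fin n → ℝ)
    (ltil : ℝ) (h0 : 0 ≤ ltil) (h1 : ltil ≤ 1)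
    (houtA : 1 < matNorm A (mPath A B a b ltil - a))
    (houtB : 1 < matNorm B (mPath A B a b ltil - b)) :
    ¬ ∃ lam : ℝ, 0 ≤ lam ∧ lam ≤ 1 ∧
        mPath A B a b lam ∈ ellipsoid A a ∩ ellipsoid B b := by
  subst hA hB
  rintro ⟨lam, hl0, hl1, hInA, hInB⟩
  simp only [ellipsoid, Set.mem_setOf_eq] at hInA hInB
  -- coordinate formulas
  have hcoordB : ∀ (mu : ℝ), 0 ≤ mu → mu ≤ 1 → ∀ i,
      (mPath (Matrix.diagonal dA) (Matrix.diagonal dB) a b mu - b) i =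
        (mu * dA i / (mu * dA i + (1 - mu) * dB i)) * (a i - b i) := by
    intro mu hm0 hm1 i
    have hD : mu * dA i + (1 - mu) * dB i ≠ 0 := (Dpos (hdA i) (hdB i) hm0 hm1).ne'
    rw [mPath_eq dA dB hdA hdB a b hm0 hm1]
    simp only [Pi.sub_apply]
    rw [div_mul_eq_mul_div, div_sub' hD, div_eq_div_iff hD hD]
    ring
  have hcoordA : ∀ (mu : ℝ), 0 ≤ mu → mu ≤ 1 → ∀ i,
      (mPath (Matrix.diagonal dA) (Matrix.diagonal dB) a b mu - a) i =
        ((1 - mu) * dB i / ((1 - mu) * dB i + (1 - (1 - mu)) * dA i)) * (b i - a i) := by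
    intro mu hm0 hm1 i
    have hD : mu * dA i + (1 - mu) * dB i ≠ 0 := (Dpos (hdA i) (hdB i) hm0 hm1).ne'
    have hD' : (1 - mu) * dB i + (1 - (1 - mu)) * dA i ≠ 0 := by
      rw [show (1 - mu) * dB i + (1 - (1 - mu)) * dA i
        = mu * dA i + (1 - mu) * dB i by ring]
      exact hD
    rw [mPath_eq dA dB hdA hdB a b hm0 hm1]
    simp only [Pi.sub_apply]
    rw [div_mul_eq_mul_div, div_sub' hD, div_eq_div_iff hD hD']
    ring
  -- generic monotone comparison per coordinate
  have main : ∀ (p q x y c : ℝ), 0 < p → 0 < q → 0 ≤ x → x ≤ y → y ≤ 1 →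
      q * ((x * p / (x * p + (1 - x) * q)) * c)^2 ≤
      q * ((y * p / (y * p + (1 - y) * q)) * c)^2 := by
    intro p q x y c hp hq hx hxy hy1
    have h1 : x * p / (x * p + (1 - x) * q) ≤ y * p / (y * p + (1 - y) * q) :=
      key_frac_mono p q hp hq hx hxy hy1
    have h2 : 0 ≤ x * p / (x * p + (1 - x) * q) :=
      div_nonneg (by positivity) (Dpos hp hq hx (le_trans hxy hy1)).le
    have h3 : (x * p / (x * p + (1 - x) * q))^2 ≤ (y * p / (y * p + (1 - y) * q))^2 :=
      pow_le_pow_left₀ h2 h1 2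
    nlinarith [mul_nonneg (mul_nonneg hq.le (sq_nonneg c)) (sub_nonneg.2 h3)]
  rcases le_total ltil lam with hcmp | hcmp
  · -- then B-norm at lam ≥ B-norm at ltil > 1
    have hmono : matNorm (Matrix.diagonal dB)
        (mPath (Matrix.diagonal dA) (Matrix.diagonal dB) a b ltil - b) ≤
        matNorm (Matrix.diagonal dB)
        (mPath (Matrix.diagonal dA) (Matrix.diagonal dB) a b lam - b) := by
      rw [matNorm_diag, matNorm_diag]
      apply Real.sqrt_le_sqrt
      apply Finset.sum_le_sum
      intro i _
      rw [hcoordB ltil h0 h1 i, hcoordB lam hl0 hl1 i]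
      exact main (dA i) (dB i) ltil lam (a i - b i) (hdA i) (hdB i) h0 hcmp hl1
    linarith [hInB, houtB, hmono]
  · -- lam ≤ ltil : A-norm at lam ≥ A-norm at ltil > 1
    have hmono : matNorm (Matrix.diagonal dA)
        (mPath (Matrix.diagonal dA) (Matrix.diagonal dB) a b ltil - a) ≤
        matNorm (Matrix.diagonal dA)
        (mPath (Matrix.diagonal dA) (Matrix.diagonal dB) a b lam - a) := by
      rw [matNorm_diag, matNorm_diag]
      apply Real.sqrt_le_sqrt
      apply Finset.sum_le_sum
      intro i _
      rw [hcoordA ltil h0 h1 i, hcoordA lam hl0 hl1 i]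
      exact main (dB i) (dA i) (1 - ltil) (1 - lam) (b i - a i) (hdB i) (hdA i)
        (by linarith) (by linarith) (by linarith)
    linarith [hInA, houtA, hmono]
end

section
/- Let n be a positive integer, let A and B be symmetric positive definite real n×n matrices, and let a, b ∈ ℝⁿ. For λ ∈ [0,1] define E_λ = λA + (1−λ)B and m_λ = E_λ⁻¹(λA a + (1−λ)B b). Then the ellipsoids E(A, a) and E(B, b) have nonempty intersection if and only if there exists λ ∈ [0,1] such that m_λ ∈ E(A, a) ∩ E(B, b). -/
open Matrix

private lemma sym_dot {n : ℕ} {M : Matrix (Fin n) (Fin n) ℝ} (hM : M.IsHermitian)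
    (u v : Fin n → ℝ) : u ⬝ᵥ (M *ᵥ v) = v ⬝ᵥ (M *ᵥ u) := by
  have ht : Mᵀ = M := by
    rw [← Matrix.conjTranspose_eq_transpose_of_trivial]; exact hM
  rw [Matrix.dotProduct_mulVec, ← Matrix.mulVec_transpose, dotProduct_comm, ht]

private lemma quad_expand {n : ℕ} {M : Matrix (Fin n) (Fin n) ℝ} (hM : M.IsHermitian)
    (u v : Fin n → ℝ) :
    (u + v) ⬝ᵥ (M *ᵥ (u + v)) =
      u ⬝ᵥ (M *ᵥ u) + 2 * (u ⬝ᵥ (M *ᵥ v)) + v ⬝ᵥ (M *ᵥ v) := by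
  have h := sym_dot hM v u
  simp [Matrix.mulVec_add, dotProduct_add, add_dotProduct]
  linarith

theorem ellipsoids_intersect_iff_mPath_witness {n : ℕ} (hn : 0 < n)
    (A B : Matrix (Fin n) (Fin n) ℝ)
    (hA : A.PosDef) (hB : B.PosDef)
    (a b : Fin n → ℝ) :
    (ellipsoid A a ∩ ellipsoid B b).Nonempty ↔
      ∃ lam : ℝ, 0 ≤ lam ∧ lam ≤ 1 ∧
        mPath A B a b lam ∈ ellipsoid A a ∩ ellipsoid B b := by
  constructor
  · rintro ⟨x, hxA, hxB⟩
    -- notation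
    set E : ℝ → Matrix (Fin n) (Fin n) ℝ := fun l => l • A + (1 - l) • B with hEdef
    set c : ℝ → (Fin n → ℝ) := fun l => l • (A *ᵥ a) + (1 - l) • (B *ᵥ b) with hcdef
    set m : ℝ → (Fin n → ℝ) := mPath A B a b with hmdef
    have hm : ∀ l, m l = (E l)⁻¹ *ᵥ c l := fun l => rfl
    -- positive definiteness along the path
    have hEpd : ∀ l ∈ Set.Icc (0:ℝ) 1, (E l).PosDef := by
      rintro l ⟨hl0, hl1⟩
      refine Matrix.PosDef.of_dotProduct_mulVec_pos ?_ (fun y hy => ?_)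
      · have h1 := hA.1
        have h2 := hB.1
        simp only [Matrix.IsHermitian] at *
        rw [conjTranspose_add, conjTranspose_smul, conjTranspose_smul, h1, h2]
        simp
        rfl
      · have h1 := hA.dotProduct_mulVec_pos hy
        have h2 := hB.dotProduct_mulVec_pos hy
        simp only [star_trivial] at h1 h2 ⊢
        simp only [hEdef, Matrix.add_mulVec, Matrix.smul_mulVec,
          dotProduct_add, dotProduct_smul, smul_eq_mul]
        rcases eq_or_lt_of_le hl0 with h | h
        · simp [← h] at *; linarith
        · nlinarith
    have hdet : ∀ l ∈ Set.Icc (0:ℝ) 1, (E l).det ≠ 0 := fun l hl =>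
      ((hEpd l hl).det_pos).ne'
    have hEm : ∀ l ∈ Set.Icc (0:ℝ) 1, E l *ᵥ m l = c l := by
      intro l hl
      rw [hm, Matrix.mulVec_mulVec, Matrix.mul_nonsing_inv _ ((hdet l hl).isUnit),
        Matrix.one_mulVec]
    -- the quadratic forms
    set f : ℝ → ℝ := fun l => (m l - a) ⬝ᵥ (A *ᵥ (m l - a)) with hfdef
    set g : ℝ → ℝ := fun l => (m l - b) ⬝ᵥ (B *ᵥ (m l - b)) with hgdef
    -- minimality: λ f + (1-λ) g ≤ λ ‖x-a‖² + (1-λ)‖x-b‖²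
    have hkey : ∀ l ∈ Set.Icc (0:ℝ) 1,
        l * f l + (1 - l) * g l ≤
          l * ((x - a) ⬝ᵥ (A *ᵥ (x - a))) + (1 - l) * ((x - b) ⬝ᵥ (B *ᵥ (x - b))) := by
      intro l hl
      set w : Fin n → ℝ := x - m l with hw
      have hxa : x - a = w + (m l - a) := (sub_add_sub_cancel x (m l) a).symm
      have hxb : x - b = w + (m l - b) := (sub_add_sub_cancel x (m l) b).symm
      have eA := quad_expand hA.1 w (m l - a)
      have eB := quad_expand hB.1 w (m l - b)
      have hzero : l • (A *ᵥ (m l - a)) + (1 - l) • (B *ᵥ (m l - b)) = 0 := by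
        have h := hEm l hl
        simp only [hEdef, Matrix.add_mulVec, Matrix.smul_mulVec, hcdef] at h
        have e : l • (A *ᵥ (m l - a)) + (1 - l) • (B *ᵥ (m l - b))
            = (l • (A *ᵥ m l) + (1 - l) • (B *ᵥ m l))
              - (l • (A *ᵥ a) + (1 - l) • (B *ᵥ b)) := by
          simp only [Matrix.mulVec_sub, smul_sub]; abel
        rw [e, h, sub_self]
      have hcross : l * (w ⬝ᵥ (A *ᵥ (m l - a))) + (1 - l) * (w ⬝ᵥ (B *ᵥ (m l - b))) = 0 := by
        have : w ⬝ᵥ (l • (A *ᵥ (m l - a)) + (1 - l) • (B *ᵥ (m l - b))) = 0 := by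
          rw [hzero]; simp
        simpa [dotProduct_add, dotProduct_smul] using this
      have hEw : 0 ≤ w ⬝ᵥ (E l *ᵥ w) := by
        rcases eq_or_ne w 0 with h | h
        · simp [h]
        · exact le_of_lt (by simpa using (hEpd l hl).dotProduct_mulVec_pos h)
      have hEw' : w ⬝ᵥ (E l *ᵥ w) =
          l * (w ⬝ᵥ (A *ᵥ w)) + (1 - l) * (w ⬝ᵥ (B *ᵥ w)) := by
        simp [hEdef, Matrix.add_mulVec, Matrix.smul_mulVec,
          dotProduct_add, dotProduct_smul]
      rw [hxa, hxb, eA, eB]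
      simp only [hfdef, hgdef]
      nlinarith [hEw, hEw', hcross]
    -- x is in both ellipsoids, with squared norms ≤ 1
    have hq : ∀ (M : Matrix (Fin n) (Fin n) ℝ), M.PosDef → ∀ v : Fin n → ℝ,
        0 ≤ v ⬝ᵥ (M *ᵥ v) := by
      intro M hM v
      rcases eq_or_ne v 0 with h | h
      · simp [h]
      · exact le_of_lt (by simpa using hM.dotProduct_mulVec_pos h)
    have hxa1 : (x - a) ⬝ᵥ (A *ᵥ (x - a)) ≤ 1 := by
      have h0 := hq A hA (x - a)
      have := hxA
      simp only [ellipsoid, matNorm, Set.mem_setOf_eq] at this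
      nlinarith [Real.sq_sqrt h0, Real.sqrt_nonneg ((x - a) ⬝ᵥ (A *ᵥ (x - a)))]
    have hxb1 : (x - b) ⬝ᵥ (B *ᵥ (x - b)) ≤ 1 := by
      have h0 := hq B hB (x - b)
      have := hxB
      simp only [ellipsoid, matNorm, Set.mem_setOf_eq] at this
      nlinarith [Real.sq_sqrt h0, Real.sqrt_nonneg ((x - b) ⬝ᵥ (B *ᵥ (x - b)))]
    -- endpoints
    have hm0 : m 0 = b := by
      rw [hm 0]
      simp [hEdef, hcdef, Matrix.mulVec_mulVec,
        Matrix.nonsing_inv_mul _ hB.det_pos.ne'.isUnit]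
    have hm1 : m 1 = a := by
      rw [hm 1]
      simp [hEdef, hcdef, Matrix.mulVec_mulVec,
        Matrix.nonsing_inv_mul _ hA.det_pos.ne'.isUnit]
    -- continuity of m on [0,1]
    have hEcont : Continuous E := by
      apply continuous_matrix
      intro i j
      simp only [hEdef, Matrix.add_apply, Matrix.smul_apply, smul_eq_mul]
      fun_prop
    have hccont : Continuous c := by
      apply continuous_pi
      intro i
      simp only [hcdef, Pi.add_apply, Pi.smul_apply, smul_eq_mul]
      fun_prop
    have hmcont : ContinuousOn m (Set.Icc 0 1) := by
      have heq : ∀ l ∈ Set.Icc (0:ℝ) 1,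
          m l = ((E l).det)⁻¹ • ((E l).adjugate *ᵥ c l) := by
        intro l hl
        rw [hm, Matrix.inv_def, Ring.inverse_eq_inv', Matrix.smul_mulVec]
      refine ContinuousOn.congr ?_ heq
      exact ((hEcont.matrix_det.continuousOn.inv₀ hdet).smul
        ((hEcont.matrix_adjugate.matrix_mulVec hccont).continuousOn))
    -- IVT on f - g
    have hFcont : ContinuousOn (fun l => f l - g l) (Set.Icc 0 1) := by
      have h1 : Continuous fun v : Fin n → ℝ => (v - a) ⬝ᵥ (A *ᵥ (v - a)) := by
        have hv : Continuous fun v : Fin n → ℝ => v - a := by fun_prop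
        exact hv.dotProduct (continuous_const.matrix_mulVec hv)
      have h2 : Continuous fun v : Fin n → ℝ => (v - b) ⬝ᵥ (B *ᵥ (v - b)) := by
        have hv : Continuous fun v : Fin n → ℝ => v - b := by fun_prop
        exact hv.dotProduct (continuous_const.matrix_mulVec hv)
      exact (h1.comp_continuousOn hmcont).sub (h2.comp_continuousOn hmcont)
    have hF1 : f 1 - g 1 ≤ 0 := by
      have e1 : f 1 = 0 := by simp [hfdef, hm1]
      have e2 : 0 ≤ g 1 := by simpa [hgdef, hm1] using hq B hB (a - b)
      linarith
    have hF0 : 0 ≤ f 0 - g 0 := by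
      have e1 : g 0 = 0 := by simp [hgdef, hm0]
      have e2 : 0 ≤ f 0 := by simpa [hfdef, hm0] using hq A hA (b - a)
      linarith
    obtain ⟨l, hl, hFl⟩ :=
      intermediate_value_Icc' (by norm_num : (0:ℝ) ≤ 1) hFcont ⟨hF1, hF0⟩
    have hfg : f l = g l := by linarith [sub_eq_zero.mp hFl]
    obtain ⟨hl0, hl1⟩ := hl
    have hkl := hkey l ⟨hl0, hl1⟩
    have hfl1 : f l ≤ 1 := by nlinarith
    have hgl1 : g l ≤ 1 := by rw [← hfg]; exact hfl1
    refine ⟨l, hl0, hl1, ?_, ?_⟩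
    · show matNorm A (m l - a) ≤ 1
      rw [matNorm, show (1:ℝ) = Real.sqrt 1 by simp]
      exact Real.sqrt_le_sqrt hfl1
    · show matNorm B (m l - b) ≤ 1
      rw [matNorm, show (1:ℝ) = Real.sqrt 1 by simp]
      exact Real.sqrt_le_sqrt hgl1
  · rintro ⟨l, _, _, hmem⟩
    exact ⟨mPath A B a b l, hmem⟩
end

section
/- Let n be a positive integer, let A and B be diagonal positive definite real n×n matrices, and let a, b ∈ ℝⁿ. For λ ∈ [0,1] define m_λ = (λA + (1−λ)B)⁻¹(λA a + (1−λ)B b). Then for every λ ∈ [0,1], ‖m_λ − b‖_B ≤ ‖a − b‖_B; that is, along the entire path the B-norm distance of m_λ from b never exceeds that of the endpoint m_1 = a. -/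
open Matrix

theorem mPath_norm_le_endpoint {n : ℕ} (hn : 0 < n)
    (A B : Matrix (Fin n) (Fin n) ℝ) (dA dB : Fin n → ℝ)
    (hA : A = Matrix.diagonal dA) (hB : B = Matrix.diagonal dB)
    (hdA : ∀ i, 0 < dA i) (hdB : ∀ i, 0 < dB i)
    (a b : Fin n → ℝ) :
    ∀ lam : ℝ, 0 ≤ lam → lam ≤ 1 →
      matNorm B (mPath A B a b lam - b) ≤ matNorm B (a - b) := by

  intro lam h0 h1
  set d : Fin n → ℝ := fun i => lam * dA i + (1 - lam) * dB i with hd_def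
  have hd : ∀ i, 0 < d i := by
    intro i
    rcases eq_or_lt_of_le h0 with h | h
    · simp [hd_def, ← h]
      exact hdB i
    · have : 0 < lam * dA i := mul_pos h (hdA i)
      have h2 : 0 ≤ (1 - lam) * dB i := mul_nonneg (by linarith) (hdB i).le
      simp only [hd_def]; linarith
  have hmat : lam • A + (1 - lam) • B = Matrix.diagonal d := by
    subst hA hB
    ext i j
    by_cases h : i = j <;>
      simp [Matrix.diagonal_apply, h, hd_def]
  have hinv : (lam • A + (1 - lam) • B)⁻¹ = Matrix.diagonal (fun i => (d i)⁻¹) := by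
    rw [hmat]
    apply Matrix.inv_eq_right_inv
    rw [Matrix.diagonal_mul_diagonal]
    ext i j
    by_cases h : i = j <;>
      simp [Matrix.diagonal_apply, h, Matrix.one_apply, mul_inv_cancel₀ (hd j).ne']
  have hm : ∀ i, (mPath A B a b lam - b) i = (lam * dA i / d i) * (a i - b i) := by
    intro i
    have hdne : d i ≠ 0 := (hd i).ne'
    have hmp : mPath A B a b lam =
        (Matrix.diagonal fun i => (d i)⁻¹) *ᵥ (lam • (A *ᵥ a) + (1 - lam) • (B *ᵥ b)) := by
      rw [mPath, hinv]
    rw [Pi.sub_apply, hmp]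
    simp only [hA, hB, Matrix.mulVec_diagonal, Pi.add_apply, Pi.smul_apply, smul_eq_mul]
    field_simp
    ring
  have key : (mPath A B a b lam - b) ⬝ᵥ (B *ᵥ (mPath A B a b lam - b))
      ≤ (a - b) ⬝ᵥ (B *ᵥ (a - b)) := by
    set w := mPath A B a b lam - b with hw
    rw [hB]
    simp only [dotProduct, Matrix.mulVec_diagonal]
    apply Finset.sum_le_sum
    intro i _
    rw [hm i]
    have hc0 : 0 ≤ lam * dA i / d i := div_nonneg (mul_nonneg h0 (hdA i).le) (hd i).le
    have hc1 : lam * dA i / d i ≤ 1 := by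
      rw [div_le_one (hd i)]
      have : 0 ≤ (1 - lam) * dB i := mul_nonneg (by linarith) (hdB i).le
      simp only [hd_def]; linarith
    set c := lam * dA i / d i
    have hsq : c * c ≤ 1 := by nlinarith
    have hu : 0 ≤ dB i * ((a - b) i * (a - b) i) :=
      mul_nonneg (hdB i).le (mul_self_nonneg _)
    calc c * (a - b) i * (dB i * (c * (a - b) i))
        = (c * c) * (dB i * ((a - b) i * (a - b) i)) := by ring
      _ ≤ 1 * (dB i * ((a - b) i * (a - b) i)) := by
          exact mul_le_mul_of_nonneg_right hsq hu
      _ = (a - b) i * (dB i * (a - b) i) := by ring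
  exact Real.sqrt_le_sqrt key
end
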